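/- Let r ≥ 1 and work in the field ℚ(q_1,…,q_r) of rational functions in r indeterminates over ℚ. Let λ_1 ≥ λ_2 ≥ … ≥ λ_r ≥ 0 be integers, and let H_m denote the complete homogeneous symmetric polynomial of degree m in the 2r elements q_1,…,q_r, q_1^{−1},…,q_r^{−1}. Define the r×r matrix M by M_{1j} = H_{λ_j + 1 − j} (first row) and M_{ij} = H_{λ_j + i − j} + H_{λ_j + 2 − i − j} for 2 ≤ i ≤ r. Then (the Jacobi–Trudy identity for Sp(2r), in alternant form): det[ q_i^{λ_j + r + 1 − j} − q_i^{−(λ_j + r + 1 − j)} ]_{i,j=1}^{r} = det M · det[ q_i^{r + 1 − j} − q_i^{−(r + 1 − j)} ]_{i,j=1}^{r}. -/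

import Mathlib

open Finset MvPolynomial

noncomputable def hpoly {R : Type*} [CommRing R] {ι : Type*} [Fintype ι] [DecidableEq ι]
    (x : ι → R) (m : ℤ) : R :=
  if m < 0 then 0
  else ∑ d ∈ (Fintype.piFinset fun _ : ι => Finset.range (m.toNat + 1)).filter
      (fun d => ∑ i, d i = m.toNat),
    ∏ i, x i ^ d i

section Geom
variable {K : Type*} [CommRing K]

noncomputable def geom (a : K) : PowerSeries K := PowerSeries.mk fun n => a ^ n

lemma one_sub_mul_geom (a : K) :
    ((1 : PowerSeries K) - PowerSeries.C a * PowerSeries.X) * geom a = 1 := by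
  ext n
  cases n with
  | zero => simp [geom]
  | succ n =>
    rw [sub_mul, one_mul, mul_assoc, map_sub, PowerSeries.coeff_C_mul,
      PowerSeries.coeff_succ_X_mul]
    simp [geom, pow_succ, mul_comm]

lemma geom_sub_geom (a b : K) :
    geom a - geom b = PowerSeries.C (a - b) * PowerSeries.X * (geom a * geom b) := by
  have h1 := one_sub_mul_geom a
  have h2 := one_sub_mul_geom b
  have : geom a - geom b =
      geom a * (((1 : PowerSeries K) - PowerSeries.C b * PowerSeries.X) * geom b) -
      (((1 : PowerSeries K) - PowerSeries.C a * PowerSeries.X) * geom a) * geom b := by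
    rw [h1, h2]; ring
  rw [this]; push_cast [map_sub]; ring

lemma hpoly_neg {ι : Type*} [Fintype ι] [DecidableEq ι]
    (x : ι → K) {m : ℤ} (hm : m < 0) : hpoly x m = 0 := if_pos hm

lemma hpoly_zero {ι : Type*} [Fintype ι] [DecidableEq ι] (x : ι → K) :
    hpoly x 0 = 1 := by
  rw [hpoly, if_neg (by omega)]
  rw [Finset.sum_eq_single (fun _ => 0)]
  · simp
  · intro d hd hne
    exfalso; apply hne
    simp only [Finset.mem_filter, Fintype.mem_piFinset, Finset.mem_range] at hd
    funext i
    have := Finset.sum_eq_zero_iff.mp hd.2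
    simpa using this i (mem_univ i)
  · intro h
    exfalso; apply h
    simp

lemma coeff_prod_geom {ι : Type*} [Fintype ι] [DecidableEq ι] (x : ι → K) (n : ℕ) :
    PowerSeries.coeff n (∏ i, geom (x i)) = hpoly x (n : ℤ) := by
  rw [PowerSeries.coeff_prod]
  unfold hpoly
  rw [if_neg (by omega)]
  refine Finset.sum_bij' (fun l _ => ⇑l) (fun d _ => Finsupp.equivFunOnFinite.symm d) ?_ ?_ ?_ ?_ ?_
  · intro l hl
    rw [Finset.mem_finsuppAntidiag] at hl
    simp only [Finset.mem_filter, Fintype.mem_piFinset, Finset.mem_range]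
    constructor
    · intro i
      have : l i ≤ n := by
        rw [← hl.1]
        exact Finset.single_le_sum (fun j _ => Nat.zero_le _) (Finset.mem_univ i)
      omega
    · simpa using hl.1
  · intro d hd
    simp only [Finset.mem_filter, Fintype.mem_piFinset, Finset.mem_range] at hd
    rw [Finset.mem_finsuppAntidiag]
    constructor
    · simpa using hd.2
    · exact Finset.subset_univ _
  · intro l _; exact Finsupp.equivFunOnFinite.symm_apply_apply l
  · intro d _; rfl
  · intro l _
    refine Finset.prod_congr rfl fun i _ => ?_
    simp [geom]

end Geom

section Quad
variable {K : Type*} [Field K]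

lemma quad_eq (a : K) (ha : a ≠ 0) :
    (1 - Polynomial.C a * Polynomial.X) * (1 - Polynomial.C a⁻¹ * Polynomial.X) =
      Polynomial.X ^ 2 - Polynomial.C (a + a⁻¹) * Polynomial.X + 1 := by
  have h : (Polynomial.C a) * (Polynomial.C a⁻¹) = (1 : Polynomial K) := by
    rw [← Polynomial.C_mul, mul_inv_cancel₀ ha, Polynomial.C_1]
  rw [Polynomial.C_add]
  linear_combination (Polynomial.X ^ 2 : Polynomial K) * h

lemma degree_one_sub_C_mul_X_lt (b : K) :
    ((1 : Polynomial K) - Polynomial.C b * Polynomial.X).degree < 2 := by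
  refine lt_of_le_of_lt (Polynomial.degree_sub_le _ _) ?_
  rw [max_lt_iff, Polynomial.degree_one]
  exact ⟨by norm_num, lt_of_le_of_lt (Polynomial.degree_C_mul_X_le b) (by norm_num)⟩

lemma quad_monic (b : K) : (Polynomial.X ^ 2 - Polynomial.C b * Polynomial.X + 1 : Polynomial K).Monic := by
  have : (Polynomial.X ^ 2 - Polynomial.C b * Polynomial.X + 1 : Polynomial K) =
      Polynomial.X ^ 2 + (1 - Polynomial.C b * Polynomial.X) := by ring
  rw [this]
  exact Polynomial.monic_X_pow_add (degree_one_sub_C_mul_X_lt b)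

lemma quad_natDegree (b : K) :
    (Polynomial.X ^ 2 - Polynomial.C b * Polynomial.X + 1 : Polynomial K).natDegree = 2 := by
  have h : (Polynomial.X ^ 2 - Polynomial.C b * Polynomial.X + 1 : Polynomial K) =
      Polynomial.X ^ 2 + (1 - Polynomial.C b * Polynomial.X) := by ring
  rw [h]
  refine Polynomial.natDegree_eq_of_degree_eq_some ?_
  rw [Polynomial.degree_add_eq_left_of_degree_lt (by
    rw [Polynomial.degree_X_pow]; exact degree_one_sub_C_mul_X_lt b)]
  exact Polynomial.degree_X_pow 2

lemma quad_coeff (b : K) (n : ℕ) :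
    (Polynomial.X ^ 2 - Polynomial.C b * Polynomial.X + 1 : Polynomial K).coeff n =
      if n = 0 then 1 else if n = 1 then -b else if n = 2 then 1 else 0 := by
  rcases n with _ | _ | _ | n <;>
    simp [Polynomial.coeff_one, Polynomial.coeff_X, Polynomial.coeff_X_pow]

lemma quad_reverse (b : K) :
    (Polynomial.X ^ 2 - Polynomial.C b * Polynomial.X + 1 : Polynomial K).reverse =
      Polynomial.X ^ 2 - Polynomial.C b * Polynomial.X + 1 := by
  ext n
  rw [Polynomial.coeff_reverse, quad_natDegree]
  rcases Nat.lt_or_ge 2 n with h | h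
  · rw [Polynomial.revAt_eq_self_of_lt h]
  · rw [Polynomial.revAt_le h, quad_coeff, quad_coeff]
    interval_cases n <;> norm_num

end Quad

lemma reindex_sum {K : Type*} [CommRing K] {r : ℕ} (hr : 1 ≤ r) (T : ℕ → K) (Hf : ℤ → K) (a : ℤ)
    (hsym : ∀ k, k ≤ 2 * r - 2 → T (2 * r - 2 - k) = T k) :
    ∑ k ∈ Finset.range (2 * r - 1), T k * Hf (a - 1 - k)
      = ∑ p ∈ Finset.range r, T (r - 1 - p) *
          (if p = 0 then Hf (a - (r : ℤ)) else Hf (a - r + p) + Hf (a - r - p)) := by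
  have hsplit : ∑ k ∈ Finset.range (2 * r - 1), T k * Hf (a - 1 - k)
      = (∑ k ∈ Finset.range r, T k * Hf (a - 1 - k))
        + ∑ k ∈ Finset.Ico r (2 * r - 1), T k * Hf (a - 1 - k) := by
    rw [Finset.range_eq_Ico,
      ← Finset.sum_Ico_consecutive _ (Nat.zero_le r) (by omega : r ≤ 2 * r - 1),
      ← Finset.range_eq_Ico]
  have hrhs : ∑ p ∈ Finset.range r, T (r - 1 - p) *
          (if p = 0 then Hf (a - (r : ℤ)) else Hf (a - r + p) + Hf (a - r - p))
      = (∑ p ∈ Finset.range r, T (r - 1 - p) * Hf (a - r + p))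
        + ∑ p ∈ Finset.range r, (if p = 0 then 0 else T (r - 1 - p) * Hf (a - r - p)) := by
    rw [← Finset.sum_add_distrib]
    refine Finset.sum_congr rfl fun p hp => ?_
    rcases Nat.eq_zero_or_pos p with h0 | h0
    · subst h0; simp
    · rw [if_neg (by omega), if_neg (by omega)]; ring
  rw [hsplit, hrhs]
  congr 1
  · rw [← Finset.sum_range_reflect (fun k => T k * Hf (a - 1 - k)) r]
    refine Finset.sum_congr rfl fun p hp => ?_
    rw [Finset.mem_range] at hp
    congr 2
    push_cast [Nat.cast_sub (by omega : p ≤ r - 1), Nat.cast_sub (by omega : 1 ≤ r)]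
    ring
  · have step1 : ∑ p ∈ Finset.range r, (if p = 0 then 0 else T (r - 1 - p) * Hf (a - r - p))
        = ∑ p ∈ Finset.Ico 1 r, T (r - 1 - p) * Hf (a - r - p) := by
      rw [← Finset.sum_subset
        (show Finset.Ico 1 r ⊆ Finset.range r by
          rw [Finset.range_eq_Ico]; exact Finset.Ico_subset_Ico (by omega) le_rfl)
        (fun x hx hx' => if_pos (by
          rw [Finset.mem_range] at hx; rw [Finset.mem_Ico] at hx'; omega))]
      exact Finset.sum_congr rfl fun p hp =>
        if_neg (by rw [Finset.mem_Ico] at hp; omega)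
    rw [step1]
    refine Finset.sum_nbij' (fun k => k - (r - 1)) (fun p => p + (r - 1)) ?_ ?_ ?_ ?_ ?_
    · intro k hk; rw [Finset.mem_Ico] at hk ⊢; omega
    · intro p hp; rw [Finset.mem_Ico] at hp ⊢; omega
    · intro k hk; rw [Finset.mem_Ico] at hk; omega
    · intro p hp; rw [Finset.mem_Ico] at hp; omega
    · intro k hk
      rw [Finset.mem_Ico] at hk
      rw [show r - 1 - (k - (r - 1)) = 2 * r - 2 - k from by omega, hsym k (by omega)]
      congr 2
      push_cast [Nat.cast_sub (by omega : r - 1 ≤ k), Nat.cast_sub (by omega : 1 ≤ r)]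
      ring

section Main
variable {K : Type*} [Field K] {r : ℕ} (q : Fin r → K)

noncomputable def Gser : PowerSeries K := ∏ j : Fin r ⊕ Fin r, geom (Sum.elim q (fun i => (q i)⁻¹) j)

noncomputable def ppoly (i : Fin r) : Polynomial K :=
  ∏ j ∈ univ.erase i,
    ((1 - Polynomial.C (q j) * Polynomial.X) * (1 - Polynomial.C (q j)⁻¹ * Polynomial.X))

lemma key_identity (i : Fin r) :
    geom (q i) - geom (q i)⁻¹ =
      PowerSeries.C (q i - (q i)⁻¹) * PowerSeries.X * ((ppoly q i : PowerSeries K) * Gser q) := by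
  have hG : Gser q = (geom (q i) * geom (q i)⁻¹) *
      ∏ j ∈ univ.erase i, (geom (q j) * geom (q j)⁻¹) := by
    rw [Gser, Fintype.prod_sum_type]
    simp only [Sum.elim_inl, Sum.elim_inr]
    rw [← Finset.mul_prod_erase univ (fun j => geom (q j)) (mem_univ i),
      ← Finset.mul_prod_erase univ (fun j => geom (q j)⁻¹) (mem_univ i),
      Finset.prod_mul_distrib]
    ring
  have hP : (ppoly q i : PowerSeries K) * ∏ j ∈ univ.erase i, (geom (q j) * geom (q j)⁻¹) = 1 := by
    rw [ppoly, ← Polynomial.coeToPowerSeries.ringHom_apply, map_prod, ← Finset.prod_mul_distrib]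
    refine Finset.prod_eq_one fun j _ => ?_
    simp only [map_mul, map_sub, map_one, Polynomial.coeToPowerSeries.ringHom_apply,
      Polynomial.coe_C, Polynomial.coe_X, Polynomial.coe_one, Polynomial.coe_mul,
      Polynomial.coe_sub]
    have : ((1:PowerSeries K) - PowerSeries.C (q j) * PowerSeries.X) *
        ((1:PowerSeries K) - PowerSeries.C (q j)⁻¹ * PowerSeries.X) *
        (geom (q j) * geom (q j)⁻¹) =
        (((1:PowerSeries K) - PowerSeries.C (q j) * PowerSeries.X) * geom (q j)) *
        (((1:PowerSeries K) - PowerSeries.C (q j)⁻¹ * PowerSeries.X) * geom (q j)⁻¹) := by ring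
    rw [this, one_sub_mul_geom, one_sub_mul_geom, one_mul]
  calc geom (q i) - geom (q i)⁻¹
      = PowerSeries.C (q i - (q i)⁻¹) * PowerSeries.X * (geom (q i) * geom (q i)⁻¹) :=
        geom_sub_geom _ _
    _ = PowerSeries.C (q i - (q i)⁻¹) * PowerSeries.X * ((ppoly q i : PowerSeries K) * Gser q) := by
        rw [hG]; rw [show (ppoly q i : PowerSeries K) *
          ((geom (q i) * geom (q i)⁻¹) * ∏ j ∈ univ.erase i, (geom (q j) * geom (q j)⁻¹)) =
          (geom (q i) * geom (q i)⁻¹) * ((ppoly q i : PowerSeries K) *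
            ∏ j ∈ univ.erase i, (geom (q j) * geom (q j)⁻¹)) from by ring, hP, mul_one]


lemma ppoly_eq (hq : ∀ j, q j ≠ 0) (i : Fin r) :
    ppoly q i = ∏ j ∈ univ.erase i,
      (Polynomial.X ^ 2 - Polynomial.C (q j + (q j)⁻¹) * Polynomial.X + 1) :=
  Finset.prod_congr rfl fun j _ => quad_eq (q j) (hq j)

lemma ppoly_natDegree (hq : ∀ j, q j ≠ 0) (i : Fin r) :
    (ppoly q i).natDegree = 2 * r - 2 := by
  rw [ppoly_eq q hq i, Polynomial.natDegree_prod _ _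
    (fun j _ => (quad_monic (q j + (q j)⁻¹)).ne_zero)]
  have : ∀ j ∈ univ.erase i,
      (Polynomial.X ^ 2 - Polynomial.C (q j + (q j)⁻¹) * Polynomial.X + 1 : Polynomial K).natDegree
        = 2 := fun j _ => quad_natDegree _
  rw [Finset.sum_congr rfl this, Finset.sum_const, Finset.card_erase_of_mem (mem_univ i),
    Finset.card_univ, Fintype.card_fin, smul_eq_mul]
  omega

lemma ppoly_reverse (hq : ∀ j, q j ≠ 0) (i : Fin r) :
    (ppoly q i).reverse = ppoly q i := by
  rw [ppoly_eq q hq i]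
  induction (univ.erase i) using Finset.cons_induction with
  | empty =>
    rw [Finset.prod_empty, ← Polynomial.C_1, Polynomial.reverse_C]
  | cons a s ha ih =>
    rw [Finset.prod_cons, Polynomial.reverse_mul_of_domain, ih, quad_reverse]

lemma ppoly_coeff_symm (hq : ∀ j, q j ≠ 0) (i : Fin r) {k : ℕ} (hk : k ≤ 2 * r - 2) :
    (ppoly q i).coeff (2 * r - 2 - k) = (ppoly q i).coeff k := by
  conv_rhs => rw [← ppoly_reverse q hq i]
  rw [Polynomial.coeff_reverse, ppoly_natDegree q hq i, Polynomial.revAt_le hk]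

lemma natDegree_ppoly_le (i : Fin r) : (ppoly q i).natDegree ≤ 2 * r - 2 := by
  refine (Polynomial.natDegree_prod_le _ _).trans ?_
  have h1 : ∀ a : K, ((1 : Polynomial K) - Polynomial.C a * Polynomial.X).natDegree ≤ 1 := by
    intro a
    refine (Polynomial.natDegree_sub_le _ _).trans ?_
    simp only [Polynomial.natDegree_one, max_le_iff]
    refine ⟨Nat.zero_le 1, (Polynomial.natDegree_mul_le).trans ?_⟩
    simp
  have h2 : ∀ j ∈ univ.erase i,
      (((1 : Polynomial K) - Polynomial.C (q j) * Polynomial.X) *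
        ((1 : Polynomial K) - Polynomial.C (q j)⁻¹ * Polynomial.X)).natDegree ≤ 2 := by
    intro j _
    refine (Polynomial.natDegree_mul_le).trans ?_
    have := h1 (q j); have := h1 (q j)⁻¹; omega
  refine (Finset.sum_le_sum h2).trans ?_
  rw [Finset.sum_const, Finset.card_erase_of_mem (mem_univ i), Finset.card_univ,
    Fintype.card_fin, smul_eq_mul]
  omega

lemma ML (i : Fin r) (a : ℕ) (ha : 1 ≤ a) (hr : 1 ≤ r) :
    q i ^ a - (q i)⁻¹ ^ a = (q i - (q i)⁻¹) *
      ∑ k ∈ Finset.range (2 * r - 1),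
        (ppoly q i).coeff k * hpoly (Sum.elim q (fun i => (q i)⁻¹)) ((a : ℤ) - 1 - k) := by
  obtain ⟨n, rfl⟩ : ∃ n, a = n + 1 := ⟨a - 1, by omega⟩
  have h := congrArg (PowerSeries.coeff (n + 1)) (key_identity q i)
  rw [map_sub] at h
  have hLc : ∀ c : K, PowerSeries.coeff (n+1) (geom c) = c ^ (n+1) := fun c => by simp [geom]
  rw [hLc, hLc] at h
  rw [h]
  rw [mul_assoc, PowerSeries.coeff_C_mul, PowerSeries.coeff_succ_X_mul]
  congr 1
  rw [PowerSeries.coeff_mul]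
  rw [Finset.Nat.sum_antidiagonal_eq_sum_range_succ_mk]
  have hg : ∀ k : ℕ, PowerSeries.coeff k (Gser q) =
      hpoly (Sum.elim q (fun i => (q i)⁻¹)) (k : ℤ) := fun k => coeff_prod_geom _ k
  -- both sums equal the sum over range (max (n+1) (2r-1))
  have common : ∀ N : ℕ, n + 1 ≤ N → 2 * r - 1 ≤ N →
      (∑ k ∈ Finset.range (n+1), (Polynomial.coeff (ppoly q i) k) *
          hpoly (Sum.elim q (fun i => (q i)⁻¹)) (((n:ℤ) + 1) - 1 - k)) =
      ∑ k ∈ Finset.range N, (Polynomial.coeff (ppoly q i) k) *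
          hpoly (Sum.elim q (fun i => (q i)⁻¹)) (((n:ℤ) + 1) - 1 - k) := by
    intro N h1 h2
    refine Finset.sum_subset (Finset.range_mono h1) ?_
    intro k _ hk
    rw [Finset.mem_range, not_lt] at hk
    rw [hpoly_neg _ (by omega), mul_zero]
  calc ∑ k ∈ Finset.range (n+1), PowerSeries.coeff (k, n - k).1 ((ppoly q i : PowerSeries K)) *
        PowerSeries.coeff (k, n - k).2 (Gser q)
      = ∑ k ∈ Finset.range (n+1), (Polynomial.coeff (ppoly q i) k) *
          hpoly (Sum.elim q (fun i => (q i)⁻¹)) (((n:ℤ) + 1) - 1 - k) := by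
        refine Finset.sum_congr rfl fun k hk => ?_
        rw [Finset.mem_range] at hk
        rw [hg, Polynomial.coeff_coe]
        congr 2
        push_cast
        omega
    _ = ∑ k ∈ Finset.range (max (n+1) (2*r-1)), (Polynomial.coeff (ppoly q i) k) *
          hpoly (Sum.elim q (fun i => (q i)⁻¹)) (((n:ℤ) + 1) - 1 - k) :=
        common _ (le_max_left _ _) (le_max_right _ _)
    _ = ∑ k ∈ Finset.range (2*r-1), (Polynomial.coeff (ppoly q i) k) *
          hpoly (Sum.elim q (fun i => (q i)⁻¹)) (((n:ℤ) + 1) - 1 - k) := by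
        symm
        refine Finset.sum_subset (Finset.range_mono (le_max_right _ _)) ?_
        intro k _ hk
        rw [Finset.mem_range, not_lt] at hk
        rw [Polynomial.coeff_eq_zero_of_natDegree_lt
          (lt_of_le_of_lt (natDegree_ppoly_le q i) (by omega)), zero_mul]
    _ = _ := rfl

lemma ROW (hq : ∀ j, q j ≠ 0) (hr : 1 ≤ r) (i : Fin r) (a : ℤ) (ha : 1 ≤ a) :
    q i ^ a - q i ^ (-a) =
      ∑ p ∈ Finset.range r, ((q i - (q i)⁻¹) * (ppoly q i).coeff (r - 1 - p)) *
        (if p = 0 then hpoly (Sum.elim q fun i => (q i)⁻¹) (a - r)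
         else hpoly (Sum.elim q fun i => (q i)⁻¹) (a - r + p) +
              hpoly (Sum.elim q fun i => (q i)⁻¹) (a - r - p)) := by
  lift a to ℕ using (by omega : 0 ≤ a) with A hA
  have hA1 : 1 ≤ A := by exact_mod_cast ha
  have hLHS : q i ^ (A : ℤ) - q i ^ (-(A:ℤ)) = q i ^ A - (q i)⁻¹ ^ A := by
    rw [zpow_natCast, zpow_neg, zpow_natCast, inv_pow]
  rw [hLHS, ML q i A hA1 hr, Finset.mul_sum]
  have hfold : ∀ k ∈ Finset.range (2 * r - 1),
      (q i - (q i)⁻¹) * ((ppoly q i).coeff k * hpoly (Sum.elim q fun i => (q i)⁻¹) ((A:ℤ) - 1 - k))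
      = ((q i - (q i)⁻¹) * (ppoly q i).coeff k) *
          hpoly (Sum.elim q fun i => (q i)⁻¹) ((A:ℤ) - 1 - k) := fun k _ => by ring
  rw [Finset.sum_congr rfl hfold]
  exact reindex_sum hr (fun k => (q i - (q i)⁻¹) * (ppoly q i).coeff k)
    (hpoly (Sum.elim q fun i => (q i)⁻¹)) (A : ℤ)
    (fun k hk => by rw [ppoly_coeff_symm q hq i hk])

end Main

theorem main_det {K : Type*} [Field K] {r : ℕ} (hr : 1 ≤ r) (q : Fin r → K)
    (hq : ∀ i, q i ≠ 0) (lam : Fin r → ℤ) (hnonneg : ∀ j, 0 ≤ lam j) :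
    Matrix.det (Matrix.of fun i j : Fin r =>
        q i ^ (lam j + r - (j.val : ℤ)) - q i ^ (-(lam j + r - (j.val : ℤ)))) =
    Matrix.det (Matrix.of fun i j : Fin r =>
        if (i : ℕ) = 0 then hpoly (Sum.elim q fun i => (q i)⁻¹) (lam j - (j.val : ℤ))
        else hpoly (Sum.elim q fun i => (q i)⁻¹) (lam j + (i.val : ℤ) - (j.val : ℤ)) +
             hpoly (Sum.elim q fun i => (q i)⁻¹) (lam j - (i.val : ℤ) - (j.val : ℤ))) *
    Matrix.det (Matrix.of fun i j : Fin r =>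
        q i ^ ((r : ℤ) - (j.val : ℤ)) - q i ^ (-((r : ℤ) - (j.val : ℤ)))) := by
  set Hf : ℤ → K := hpoly (Sum.elim q fun i => (q i)⁻¹) with hHf
  set Gmat : Matrix (Fin r) (Fin r) K :=
    Matrix.of (fun i p => (q i - (q i)⁻¹) * (ppoly q i).coeff (r - 1 - p.val)) with hGmat
  set M : Matrix (Fin r) (Fin r) K := Matrix.of (fun i j =>
    if (i : ℕ) = 0 then Hf (lam j - (j.val : ℤ))
    else Hf (lam j + (i.val : ℤ) - (j.val : ℤ)) + Hf (lam j - (i.val : ℤ) - (j.val : ℤ))) with hM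
  set M0 : Matrix (Fin r) (Fin r) K := Matrix.of (fun p j =>
    if (p : ℕ) = 0 then Hf (-(j.val : ℤ))
    else Hf ((p.val : ℤ) - (j.val : ℤ)) + Hf (-(p.val : ℤ) - (j.val : ℤ))) with hM0
  have entry : ∀ (mu : Fin r → ℤ), (∀ j, 0 ≤ mu j) → ∀ i j,
      q i ^ (mu j + r - (j.val : ℤ)) - q i ^ (-(mu j + r - (j.val : ℤ)))
        = ∑ p : Fin r, Gmat i p *
            (if (p : ℕ) = 0 then Hf (mu j - (j.val : ℤ))
             else Hf (mu j + (p.val : ℤ) - (j.val : ℤ)) + Hf (mu j - (p.val : ℤ) - (j.val : ℤ))) := by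
    intro mu hmu i j
    have hjr : (j.val : ℤ) ≤ (r : ℤ) - 1 := by
      have := j.isLt; omega
    rw [ROW q hq hr i (mu j + r - (j.val : ℤ)) (by have := hmu j; omega)]
    rw [← Fin.sum_univ_eq_sum_range (fun p =>
      ((q i - (q i)⁻¹) * (ppoly q i).coeff (r - 1 - p)) *
        (if p = 0 then Hf (mu j + r - (j.val : ℤ) - r)
         else Hf (mu j + r - (j.val : ℤ) - r + p) + Hf (mu j + r - (j.val : ℤ) - r - p))) r]
    refine Finset.sum_congr rfl fun p _ => ?_
    simp only [hGmat, Matrix.of_apply]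
    congr 1
    rcases Nat.eq_zero_or_pos p.val with h0 | h0
    · rw [if_pos h0, if_pos h0]
      congr 1
      omega
    · rw [if_neg (by omega), if_neg (by omega)]
      congr 2 <;> omega
  have hAmat : (Matrix.of fun i j : Fin r =>
      q i ^ (lam j + r - (j.val : ℤ)) - q i ^ (-(lam j + r - (j.val : ℤ)))) = Gmat * M := by
    ext i j
    rw [Matrix.mul_apply, Matrix.of_apply]
    exact entry lam hnonneg i j
  have hDmat : (Matrix.of fun i j : Fin r =>
      q i ^ ((r : ℤ) - (j.val : ℤ)) - q i ^ (-((r : ℤ) - (j.val : ℤ)))) = Gmat * M0 := by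
    ext i j
    rw [Matrix.mul_apply, Matrix.of_apply]
    have := entry (fun _ => 0) (fun _ => le_rfl) i j
    simp only [zero_add, zero_sub] at this
    convert this using 3
    simp only [hM0, Matrix.of_apply]
  have hM0det : M0.det = 1 := by
    have htri : M0.BlockTriangular OrderDual.toDual := by
      intro p j hlt
      have hpj : p < j := hlt
      have hpj' : (p.val : ℤ) < (j.val : ℤ) := by exact_mod_cast hpj
      simp only [hM0, Matrix.of_apply, hHf]
      rcases Nat.eq_zero_or_pos p.val with h0 | h0
      · rw [if_pos h0, hpoly_neg _ (by omega)]
      · rw [if_neg (by omega), hpoly_neg _ (by omega), hpoly_neg _ (by omega), add_zero]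
    rw [Matrix.det_of_lowerTriangular M0 htri]
    refine Finset.prod_eq_one fun p _ => ?_
    simp only [hM0, Matrix.of_apply, hHf]
    rcases Nat.eq_zero_or_pos p.val with h0 | h0
    · rw [if_pos h0, show (-(p.val : ℤ)) = 0 from by omega, hpoly_zero]
    · rw [if_neg (by omega), show ((p.val : ℤ) - (p.val : ℤ)) = 0 from by ring,
        hpoly_zero, hpoly_neg _ (by omega), add_zero]
  rw [hAmat, hDmat, Matrix.det_mul, Matrix.det_mul, hM0det, mul_one]
  ring

theorem sp_jacobi_trudy (r : ℕ) (hr : 1 ≤ r)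
    (lam : Fin r → ℤ) (hanti : Antitone lam) (hnonneg : ∀ j, 0 ≤ lam j) :
    let K := FractionRing (MvPolynomial (Fin r) ℚ)
    let q : Fin r → K := fun i => algebraMap (MvPolynomial (Fin r) ℚ) K (X i)
    let H : ℤ → K := hpoly (Sum.elim q fun i => (q i)⁻¹)
    Matrix.det (Matrix.of fun i j : Fin r =>
        q i ^ (lam j + r - (j.val : ℤ)) - q i ^ (-(lam j + r - (j.val : ℤ)))) =
    Matrix.det (Matrix.of fun i j : Fin r =>
        if (i : ℕ) = 0 then H (lam j - (j.val : ℤ))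
        else H (lam j + (i.val : ℤ) - (j.val : ℤ)) + H (lam j - (i.val : ℤ) - (j.val : ℤ))) *
    Matrix.det (Matrix.of fun i j : Fin r =>
        q i ^ ((r : ℤ) - (j.val : ℤ)) - q i ^ (-((r : ℤ) - (j.val : ℤ)))) := by
  intro K q H
  have hq : ∀ i, q i ≠ 0 := by
    intro i h
    have h2 : (X i : MvPolynomial (Fin r) ℚ) = 0 :=
      IsFractionRing.injective (MvPolynomial (Fin r) ℚ) K (by rw [map_zero]; exact h)
    exact MvPolynomial.X_ne_zero i h2
  exact main_det hr q hq lam hnonneg
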